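/- Consider the five-dimensional space E₄ = span{1, x, x², x³, x⁶} of functions on [−1,2], and let p_{4,0},…,p_{4,4} be its unique normalized Bernstein basis on [−1,2] (explicitly, p_{4,2}(x) = 98/405 + (14/45)x − (7/90)x² − (56/405)x³ + (7/810)x⁶, and similarly for the other four). Then the coordinate of x³ on p_{4,2} equals γ_{4,2} = −16/7 < −1, and consequently there exist no nodes t_{4,0},…,t_{4,4} ∈ [−1,2] and strictly positive weights α_{4,0},…,α_{4,4} such that the operator B₄f = Σ_{k=0}^4 f(t_{4,k}) α_{4,k} p_{4,k} fixes both the constant function 1 and the function x³. -/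

import Mathlib

open Set Filter Topology

noncomputable section

/-- `p k`, `k = 0, …, n`, is a Bernstein basis of the `(n+1)`-dimensional subspace `U` of
`C^n([a,b], ℝ)`: it is a basis of `U` and each `p k` has a zero of order `k` at `a`
(derivatives of order `< k` vanish at `a`, the `k`-th does not) and a zero of order
`n - k` at `b`. -/
def IsBernsteinBasisOf (a b : ℝ) (n : ℕ) (U : Submodule ℝ (ℝ → ℝ))
    (p : Fin (n + 1) → ℝ → ℝ) : Prop :=
  (∀ k, p k ∈ U) ∧ LinearIndependent ℝ p ∧ Submodule.span ℝ (Set.range p) = U ∧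
  ∀ k : Fin (n + 1),
    (∀ j : ℕ, j < (k : ℕ) → iteratedDeriv j (p k) a = 0) ∧
    iteratedDeriv (k : ℕ) (p k) a ≠ 0 ∧
    (∀ j : ℕ, j < n - (k : ℕ) → iteratedDeriv j (p k) b = 0) ∧
    iteratedDeriv (n - (k : ℕ)) (p k) b ≠ 0

/-- The five-dimensional space `E₄ = span{1, x, x², x³, x⁶}`. -/
def E₄ : Submodule ℝ (ℝ → ℝ) :=
  Submodule.span ℝ
    {(fun _ => (1 : ℝ)), (fun x => x), (fun x => x ^ 2), (fun x => x ^ 3), (fun x => x ^ 6)}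

private lemma mem_E4 {f : ℝ → ℝ} (hf : f ∈ E₄) :
    ∃ c0 c1 c2 c3 c6 : ℝ, f = fun x => c0 + c1*x + c2*x^2 + c3*x^3 + c6*x^6 := by
  simp only [E₄, Submodule.mem_span_insert, Submodule.mem_span_singleton] at hf
  obtain ⟨c0, _, ⟨c1, _, ⟨c2, _, ⟨c3, _, ⟨c6, rfl⟩, rfl⟩, rfl⟩, rfl⟩, rfl⟩ := hf
  exact ⟨c0, c1, c2, c3, c6, by funext x; simp [smul_eq_mul]; ring⟩

private lemma hdA (c0 c1 c2 c3 c6 x : ℝ) :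
    HasDerivAt (fun y => c0 + c1*y + c2*y^2 + c3*y^3 + c6*y^6)
      (c1 + 2*c2*x + 3*c3*x^2 + 6*c6*x^5) x := by
  have h := ((((hasDerivAt_const x c0).add ((hasDerivAt_pow 1 x).const_mul c1)).add
    ((hasDerivAt_pow 2 x).const_mul c2)).add ((hasDerivAt_pow 3 x).const_mul c3)).add
    ((hasDerivAt_pow 6 x).const_mul c6)
  norm_num at h
  exact h.congr_deriv (by ring)

private lemma hdB (d0 d1 d2 d5 x : ℝ) :
    HasDerivAt (fun y => d0 + d1*y + d2*y^2 + d5*y^5) (d1 + 2*d2*x + 5*d5*x^4) x := by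
  have h := (((hasDerivAt_const x d0).add ((hasDerivAt_pow 1 x).const_mul d1)).add
    ((hasDerivAt_pow 2 x).const_mul d2)).add ((hasDerivAt_pow 5 x).const_mul d5)
  norm_num at h
  exact h.congr_deriv (by ring)

private lemma hdC (e0 e1 e4 x : ℝ) :
    HasDerivAt (fun y => e0 + e1*y + e4*y^4) (e1 + 4*e4*x^3) x := by
  have h := ((hasDerivAt_const x e0).add ((hasDerivAt_pow 1 x).const_mul e1)).add
    ((hasDerivAt_pow 4 x).const_mul e4)
  norm_num at h
  exact h.congr_deriv (by ring)

private lemma iterA (c0 c1 c2 c3 c6 x : ℝ) :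
    iteratedDeriv 0 (fun y => c0 + c1*y + c2*y^2 + c3*y^3 + c6*y^6) x
      = c0 + c1*x + c2*x^2 + c3*x^3 + c6*x^6 ∧
    iteratedDeriv 1 (fun y => c0 + c1*y + c2*y^2 + c3*y^3 + c6*y^6) x
      = c1 + 2*c2*x + 3*c3*x^2 + 6*c6*x^5 ∧
    iteratedDeriv 2 (fun y => c0 + c1*y + c2*y^2 + c3*y^3 + c6*y^6) x
      = 2*c2 + 6*c3*x + 30*c6*x^4 ∧
    iteratedDeriv 3 (fun y => c0 + c1*y + c2*y^2 + c3*y^3 + c6*y^6) x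
      = 6*c3 + 120*c6*x^3 := by
  have h1 : deriv (fun y => c0 + c1*y + c2*y^2 + c3*y^3 + c6*y^6)
      = fun y => c1 + (2*c2)*y + (3*c3)*y^2 + (6*c6)*y^5 := by
    funext z
    rw [(hdA c0 c1 c2 c3 c6 z).deriv]
    try ring
  have h2 : deriv (fun y => c1 + (2*c2)*y + (3*c3)*y^2 + (6*c6)*y^5)
      = fun y => (2*c2) + (6*c3)*y + (30*c6)*y^4 := by
    funext z
    rw [(hdB c1 (2*c2) (3*c3) (6*c6) z).deriv]
    try ring
  have h3 : deriv (fun y => (2*c2) + (6*c3)*y + (30*c6)*y^4)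
      = fun y => (6*c3) + (120*c6)*y^3 := by
    funext z
    rw [(hdC (2*c2) (6*c3) (30*c6) z).deriv]
    try ring
  refine ⟨by rw [iteratedDeriv_zero], ?_, ?_, ?_⟩
  · rw [iteratedDeriv_one, h1]
  · rw [show (2:ℕ) = 1 + 1 from rfl, iteratedDeriv_succ, iteratedDeriv_one, h1, h2]
  · rw [show (3:ℕ) = 1 + 1 + 1 from rfl, iteratedDeriv_succ, iteratedDeriv_succ,
      iteratedDeriv_one, h1, h2, h3]

set_option maxHeartbeats 2000000 in
/-- On `[-1,2]`, if `p` is the (unique) normalized non-negative Bernstein basis of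
`E₄ = span{1, x, x², x³, x⁶}`, then `p 2` is the explicitly displayed polynomial, the
coordinate of `x³` on `p 2` is `γ 2 = -16/7 < -1`, and consequently there is no generalized
Bernstein operator built on `p` (nodes in `[-1,2]`, strictly positive weights) fixing both
`1` and `x³`. -/
theorem e4_no_bernstein_operator_on_neg_one_two
    (p : Fin 5 → ℝ → ℝ)
    (hp : IsBernsteinBasisOf (-1) 2 4 E₄ p)
    (hpnn : ∀ k, ∀ x ∈ Set.Icc (-1 : ℝ) 2, 0 ≤ p k x)
    (hpnorm : ∀ x ∈ Set.Icc (-1 : ℝ) 2, ∑ k, p k x = 1) :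
    (∀ x ∈ Set.Icc (-1 : ℝ) 2, p 2 x =
      98 / 405 + 14 / 45 * x - 7 / 90 * x ^ 2 - 56 / 405 * x ^ 3 + 7 / 810 * x ^ 6) ∧
    (∀ γ : Fin 5 → ℝ, (∀ x ∈ Set.Icc (-1 : ℝ) 2, x ^ 3 = ∑ k, γ k * p k x) →
      γ 2 = -16 / 7 ∧ γ 2 < -1) ∧
    ¬ ∃ t α : Fin 5 → ℝ, (∀ k, t k ∈ Set.Icc (-1 : ℝ) 2) ∧ (∀ k, 0 < α k) ∧
        (∀ x ∈ Set.Icc (-1 : ℝ) 2, ∑ k, α k * p k x = 1) ∧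
        (∀ x ∈ Set.Icc (-1 : ℝ) 2, ∑ k, (t k) ^ 3 * α k * p k x = x ^ 3) := by
  -- ### Step 1: extract coefficients for each p k and solve vanishing conditions
  -- k = 0
  obtain ⟨a0, a1, a2, a3, a6, hf0⟩ := mem_E4 (hp.1 0)
  have hb0 := (hp.2.2.2 0).2.2.1
  have B00 := hb0 0 (by decide); have B01 := hb0 1 (by decide)
  have B02 := hb0 2 (by decide); have B03 := hb0 3 (by decide)
  rw [hf0, (iterA a0 a1 a2 a3 a6 2).1] at B00
  rw [hf0, (iterA a0 a1 a2 a3 a6 2).2.1] at B01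
  rw [hf0, (iterA a0 a1 a2 a3 a6 2).2.2.1] at B02
  rw [hf0, (iterA a0 a1 a2 a3 a6 2).2.2.2] at B03
  norm_num at B00 B01 B02 B03
  have hP0 : p 0 = fun x => a6 * (640 - 1152*x + 720*x^2 - 160*x^3 + x^6) := by
    rw [hf0]; funext x
    have e0 : a0 = 640*a6 := by linarith
    have e1 : a1 = -1152*a6 := by linarith
    have e2 : a2 = 720*a6 := by linarith
    have e3 : a3 = -160*a6 := by linarith
    rw [e0, e1, e2, e3]; ring
  -- k = 1
  obtain ⟨b0, b1, b2, b3, b6, hf1⟩ := mem_E4 (hp.1 1)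
  have ha1 := (hp.2.2.2 1).1
  have hb1 := (hp.2.2.2 1).2.2.1
  have C00 := ha1 0 (by decide)
  have C10 := hb1 0 (by decide); have C11 := hb1 1 (by decide); have C12 := hb1 2 (by decide)
  rw [hf1, (iterA b0 b1 b2 b3 b6 (-1)).1] at C00
  rw [hf1, (iterA b0 b1 b2 b3 b6 2).1] at C10
  rw [hf1, (iterA b0 b1 b2 b3 b6 2).2.1] at C11
  rw [hf1, (iterA b0 b1 b2 b3 b6 2).2.2.1] at C12
  norm_num at C00 C10 C11 C12
  have hP1 : p 1 = fun x => b6 * (-152 + 36*x + 126*x^2 - 61*x^3 + x^6) := by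
    rw [hf1]; funext x
    have e0 : b0 = -152*b6 := by linarith
    have e1 : b1 = 36*b6 := by linarith
    have e2 : b2 = 126*b6 := by linarith
    have e3 : b3 = -61*b6 := by linarith
    rw [e0, e1, e2, e3]; ring
  -- k = 2
  obtain ⟨c0, c1, c2, c3, c6, hf2⟩ := mem_E4 (hp.1 2)
  have ha2 := (hp.2.2.2 2).1
  have hb2 := (hp.2.2.2 2).2.2.1
  have D00 := ha2 0 (by decide); have D01 := ha2 1 (by decide)
  have D10 := hb2 0 (by decide); have D11 := hb2 1 (by decide)
  rw [hf2, (iterA c0 c1 c2 c3 c6 (-1)).1] at D00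
  rw [hf2, (iterA c0 c1 c2 c3 c6 (-1)).2.1] at D01
  rw [hf2, (iterA c0 c1 c2 c3 c6 2).1] at D10
  rw [hf2, (iterA c0 c1 c2 c3 c6 2).2.1] at D11
  norm_num at D00 D01 D10 D11
  have hP2 : p 2 = fun x => c6 * (28 + 36*x - 9*x^2 - 16*x^3 + x^6) := by
    rw [hf2]; funext x
    have e0 : c0 = 28*c6 := by linarith
    have e1 : c1 = 36*c6 := by linarith
    have e2 : c2 = -9*c6 := by linarith
    have e3 : c3 = -16*c6 := by linarith
    rw [e0, e1, e2, e3]; ring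
  -- k = 3
  obtain ⟨d0, d1, d2, d3, d6, hf3⟩ := mem_E4 (hp.1 3)
  have ha3 := (hp.2.2.2 3).1
  have hb3 := (hp.2.2.2 3).2.2.1
  have F00 := ha3 0 (by decide); have F01 := ha3 1 (by decide); have F02 := ha3 2 (by decide)
  have F10 := hb3 0 (by decide)
  rw [hf3, (iterA d0 d1 d2 d3 d6 (-1)).1] at F00
  rw [hf3, (iterA d0 d1 d2 d3 d6 (-1)).2.1] at F01
  rw [hf3, (iterA d0 d1 d2 d3 d6 (-1)).2.2.1] at F02
  rw [hf3, (iterA d0 d1 d2 d3 d6 2).1] at F10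
  norm_num at F00 F01 F02 F10
  have hP3 : p 3 = fun x => d6 * (-8 - 18*x - 9*x^2 + 2*x^3 + x^6) := by
    rw [hf3]; funext x
    have e0 : d0 = -8*d6 := by linarith
    have e1 : d1 = -18*d6 := by linarith
    have e2 : d2 = -9*d6 := by linarith
    have e3 : d3 = 2*d6 := by linarith
    rw [e0, e1, e2, e3]; ring
  -- k = 4
  obtain ⟨g0, g1, g2, g3, g6, hf4⟩ := mem_E4 (hp.1 4)
  have ha4 := (hp.2.2.2 4).1
  have G00 := ha4 0 (by decide); have G01 := ha4 1 (by decide)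
  have G02 := ha4 2 (by decide); have G03 := ha4 3 (by decide)
  rw [hf4, (iterA g0 g1 g2 g3 g6 (-1)).1] at G00
  rw [hf4, (iterA g0 g1 g2 g3 g6 (-1)).2.1] at G01
  rw [hf4, (iterA g0 g1 g2 g3 g6 (-1)).2.2.1] at G02
  rw [hf4, (iterA g0 g1 g2 g3 g6 (-1)).2.2.2] at G03
  norm_num at G00 G01 G02 G03
  have hP4 : p 4 = fun x => g6 * (10 + 36*x + 45*x^2 + 20*x^3 + x^6) := by
    rw [hf4]; funext x
    have e0 : g0 = 10*g6 := by linarith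
    have e1 : g1 = 36*g6 := by linarith
    have e2 : g2 = 45*g6 := by linarith
    have e3 : g3 = 20*g6 := by linarith
    rw [e0, e1, e2, e3]; ring
  -- ### Step 2: determine the scales from normalization at five points
  have N1 := hpnorm (-1) (by norm_num)
  have N2 := hpnorm 0 (by norm_num)
  have N3 := hpnorm 1 (by norm_num)
  have N4 := hpnorm 2 (by norm_num)
  have N5 := hpnorm (1/2) (by norm_num)
  rw [Fin.sum_univ_five, hP0, hP1, hP2, hP3, hP4] at N1 N2 N3 N4 N5
  norm_num at N1 N2 N3 N4 N5
  have va : a6 = 1/2673 := by linarith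
  have vb : b6 = -38/13365 := by linarith
  have vc : c6 = 7/810 := by linarith
  have vd : d6 = -2/243 := by linarith
  have vg : g6 = 1/486 := by linarith
  rw [va] at hP0; rw [vb] at hP1; rw [vc] at hP2; rw [vd] at hP3; rw [vg] at hP4
  -- ### Step 3: the three conclusions
  have key : ∀ γ : Fin 5 → ℝ, (∀ x ∈ Set.Icc (-1 : ℝ) 2, x ^ 3 = ∑ k, γ k * p k x) →
      γ 2 = -16 / 7 := by
    intro γ hγ
    have K1 := hγ (-1) (by norm_num)
    have K2 := hγ 0 (by norm_num)
    have K3 := hγ 1 (by norm_num)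
    have K4 := hγ 2 (by norm_num)
    have K5 := hγ (1/2) (by norm_num)
    rw [Fin.sum_univ_five, hP0, hP1, hP2, hP3, hP4] at K1 K2 K3 K4 K5
    norm_num at K1 K2 K3 K4 K5
    linarith
  refine ⟨?_, fun γ hγ => ⟨key γ hγ, by rw [key γ hγ]; norm_num⟩, ?_⟩
  · intro x hx
    rw [hP2]; ring
  · rintro ⟨t, α, ht, hα, hs1, hs3⟩
    have A1 := hs1 (-1) (by norm_num)
    have A2 := hs1 0 (by norm_num)
    have A3 := hs1 1 (by norm_num)
    have A4 := hs1 2 (by norm_num)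
    have A5 := hs1 (1/2) (by norm_num)
    rw [Fin.sum_univ_five, hP0, hP1, hP2, hP3, hP4] at A1 A2 A3 A4 A5
    norm_num at A1 A2 A3 A4 A5
    have hα2 : α 2 = 1 := by linarith
    have hkey : t 2 ^ 3 * α 2 = -16 / 7 := by
      refine key (fun k => t k ^ 3 * α k) ?_
      intro x hx
      rw [← hs3 x hx]
      try exact Finset.sum_congr rfl (fun k _ => by ring)
    rw [hα2, mul_one] at hkey
    have h1 : (0:ℝ) ≤ t 2 + 1 := by linarith [(ht 2).1]
    have h2 : (0:ℝ) ≤ t 2 ^ 2 - t 2 + 1 := by nlinarith [sq_nonneg (t 2 - 1)]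
    nlinarith [mul_nonneg h1 h2]
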